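/- If x* is a sharp equilibrium — i.e., ⟨v(x*), z⟩ ≤ 0 for all z in the tangent cone TC(x*) with equality iff z = 0 — then v(x*) lies in the topological interior of the polar cone PC(x*), and consequently there is a neighborhood U of x* such that ⟨v(x), x − x*⟩ < 0 for all x ∈ U \ {x*}; in particular, x* is variationally stable. -/

import Mathlib

/-- The tangent cone to `X` at `p`: the closure of the set of rays emanating from `p`
through points of `X`. -/
def tanCone {E : Type*} [NormedAddCommGroup E] [NormedSpace ℝ E]
    (X : Set E) (p : E) : Set E :=
  closure {z : E | ∃ t : ℝ, 0 ≤ t ∧ ∃ x ∈ X, z = t • (x - p)}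

/-- The polar cone to `X` at `p`. -/
def polCone {E : Type*} [NormedAddCommGroup E] [InnerProductSpace ℝ E]
    (X : Set E) (p : E) : Set E :=
  {y : E | ∀ z ∈ tanCone X p, (inner ℝ y z : ℝ) ≤ 0}

lemma tanCone_smul {E : Type*} [NormedAddCommGroup E] [NormedSpace ℝ E]
    (X : Set E) (p : E) {t : ℝ} (ht : 0 ≤ t) {z : E} (hz : z ∈ tanCone X p) :
    t • z ∈ tanCone X p := by
  have hmap : (fun w : E => t • w) '' {z : E | ∃ s : ℝ, 0 ≤ s ∧ ∃ x ∈ X, z = s • (x - p)}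
      ⊆ {z : E | ∃ s : ℝ, 0 ≤ s ∧ ∃ x ∈ X, z = s • (x - p)} := by
    rintro w ⟨u, ⟨s, hs, x, hx, rfl⟩, rfl⟩
    exact ⟨t * s, mul_nonneg ht hs, x, hx, (mul_smul t s _).symm⟩
  have hc : Continuous (fun w : E => t • w) := continuous_const_smul t
  have : t • z ∈ closure ((fun w : E => t • w) ''
      {z : E | ∃ s : ℝ, 0 ≤ s ∧ ∃ x ∈ X, z = s • (x - p)}) :=
    (hc.continuousWithinAt).mem_closure_image hz
  exact closure_mono hmap this

lemma mem_tanCone_of_mem {E : Type*} [NormedAddCommGroup E] [NormedSpace ℝ E]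
    {X : Set E} {p x : E} (hx : x ∈ X) : x - p ∈ tanCone X p :=
  subset_closure ⟨1, zero_le_one, x, hx, (one_smul ℝ _).symm⟩


/-- If `x*` is a sharp equilibrium (`⟨v(x*), z⟩ ≤ 0` for all `z ∈ TC(x*)`,
with equality iff `z = 0`), then `v(x*)` lies in the interior of the polar cone `PC(x*)`,
and there is a neighborhood `U` of `x*` with `⟨v(x), x − x*⟩ < 0` for all
`x ∈ U ∩ X \ {x*}`; in particular `x*` is variationally stable. -/
theorem stmt19
    {E : Type*} [NormedAddCommGroup E] [InnerProductSpace ℝ E] [FiniteDimensional ℝ E]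
    (X : Set E) (hXc : IsCompact X) (hXconv : Convex ℝ X) (hXne : X.Nonempty)
    (v : E → E) (hv : ContinuousOn v X)
    (xs : E) (hxs : xs ∈ X)
    (hsharp : ∀ z ∈ tanCone X xs, (inner ℝ (v xs) z : ℝ) ≤ 0)
    (hsharp_eq : ∀ z ∈ tanCone X xs, (inner ℝ (v xs) z : ℝ) = 0 → z = 0) :
    v xs ∈ interior (polCone X xs) ∧
      ∃ U ∈ nhds xs, ∀ x ∈ U ∩ X, x ≠ xs → (inner ℝ (v x) (x - xs) : ℝ) < 0 := by
  -- quantitative sharpness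
  obtain ⟨c, hc, hkey⟩ : ∃ c : ℝ, 0 < c ∧ ∀ z ∈ tanCone X xs,
      (inner ℝ (v xs) z : ℝ) ≤ -c * ‖z‖ := by
    set K := tanCone X xs ∩ Metric.sphere (0 : E) 1 with hK
    by_cases hKne : K.Nonempty
    · have hKc : IsCompact K :=
        (isCompact_sphere (0 : E) 1).inter_left (isClosed_closure)
      obtain ⟨z₀, hz₀K, hmax⟩ := hKc.exists_isMaxOn hKne
        ((Continuous.inner (continuous_const : Continuous fun _ : E => v xs) continuous_id).continuousOn : ContinuousOn (fun z : E => (inner ℝ (v xs) z : ℝ)) K)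
      have hz₀ : z₀ ∈ tanCone X xs := hz₀K.1
      have hz₀ne : z₀ ≠ 0 := by
        intro h; have := hz₀K.2; rw [h] at this; simp at this
      have hneg : (inner ℝ (v xs) z₀ : ℝ) < 0 :=
        lt_of_le_of_ne (hsharp _ hz₀) (fun h => hz₀ne (hsharp_eq _ hz₀ h))
      refine ⟨-(inner ℝ (v xs) z₀ : ℝ), by linarith, ?_⟩
      intro z hz
      rcases eq_or_ne z 0 with rfl | hzne
      · simp
      · have hnz : (0:ℝ) < ‖z‖ := norm_pos_iff.mpr hzne
        have hu : ‖z‖⁻¹ • z ∈ K := by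
          refine ⟨tanCone_smul X xs (by positivity) hz, ?_⟩
          simp [norm_smul, abs_of_pos (inv_pos.mpr hnz), inv_mul_cancel₀ hnz.ne']
        have := hmax hu
        have h2 : (inner ℝ (v xs) (‖z‖⁻¹ • z) : ℝ) ≤ inner ℝ (v xs) z₀ := this
        rw [real_inner_smul_right] at h2
        have : (inner ℝ (v xs) z : ℝ) ≤ ‖z‖ * inner ℝ (v xs) z₀ := by
          have := mul_le_mul_of_nonneg_left h2 hnz.le
          rwa [mul_inv_cancel_left₀ hnz.ne'] at this
        nlinarith
    · refine ⟨1, one_pos, ?_⟩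
      intro z hz
      rcases eq_or_ne z 0 with rfl | hzne
      · simp
      · exfalso
        have hnz : (0:ℝ) < ‖z‖ := norm_pos_iff.mpr hzne
        exact hKne ⟨‖z‖⁻¹ • z, tanCone_smul X xs (by positivity) hz, by
          simp [norm_smul, abs_of_pos (inv_pos.mpr hnz), inv_mul_cancel₀ hnz.ne']⟩
  constructor
  · -- ball of radius c around v xs is in polCone
    refine mem_interior.mpr ⟨Metric.ball (v xs) c, ?_, Metric.isOpen_ball,
      Metric.mem_ball_self hc⟩
    intro y hy z hz
    have h1 : (inner ℝ (y - v xs) z : ℝ) ≤ ‖y - v xs‖ * ‖z‖ := real_inner_le_norm _ _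
    have h2 : ‖y - v xs‖ < c := by rwa [Metric.mem_ball, dist_eq_norm] at hy
    have h3 : (inner ℝ (v xs) z : ℝ) ≤ -c * ‖z‖ := hkey z hz
    have h4 : (inner ℝ y z : ℝ) = inner ℝ (v xs) z + inner ℝ (y - v xs) z := by
      rw [← inner_add_left]; congr 1; abel
    nlinarith [norm_nonneg z, norm_nonneg (y - v xs)]
  · -- neighborhood
    have hcw : ContinuousWithinAt v X xs := hv xs hxs
    have hball : Metric.ball (v xs) (c/2) ∈ nhds (v xs) :=
      Metric.ball_mem_nhds _ (by linarith)
    have hpre : v ⁻¹' Metric.ball (v xs) (c/2) ∈ nhdsWithin xs X := hcw hball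
    rw [mem_nhdsWithin] at hpre
    obtain ⟨U, hUo, hxsU, hUsub⟩ := hpre
    refine ⟨U, hUo.mem_nhds hxsU, ?_⟩
    intro x hx hne
    have hvx : ‖v x - v xs‖ < c / 2 := by
      have := hUsub hx
      simpa [Metric.mem_ball, dist_eq_norm] using this
    have htc : x - xs ∈ tanCone X xs := mem_tanCone_of_mem hx.2
    have h3 : (inner ℝ (v xs) (x - xs) : ℝ) ≤ -c * ‖x - xs‖ := hkey _ htc
    have h1 : (inner ℝ (v x - v xs) (x - xs) : ℝ) ≤ ‖v x - v xs‖ * ‖x - xs‖ :=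
      real_inner_le_norm _ _
    have h4 : (inner ℝ (v x) (x - xs) : ℝ) = inner ℝ (v xs) (x - xs) + inner ℝ (v x - v xs) (x - xs) := by
      rw [← inner_add_left]; congr 1; abel
    have hnz : (0:ℝ) < ‖x - xs‖ := norm_pos_iff.mpr (sub_ne_zero.mpr hne)
    nlinarith
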